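/- Let G be a finite UCS p-group of odd exponent p² and H a subgroup with Φ(G) ≤ H ≤ G. Then H is powerfully embedded in G (i.e. [H,G] ≤ H^p) if and only if H/Φ(G) is an ideal of the anti-commutative algebra L(G). -/

import Mathlib

open scoped commutatorElement

private lemma semicomm_pow_aux {G : Type*} [Group G] (x y : G)
    (hc : ∀ g : G, Commute ⁅y, x⁆ g) (n : ℕ) :
    y ^ n * x = x * y ^ n * ⁅y, x⁆ ^ n := by
  have h1 : y * x = x * y * ⁅y, x⁆ := by
    have h2 : ⁅y, x⁆ * x * y = y * x := by rw [commutatorElement_def]; group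
    calc y * x = ⁅y, x⁆ * x * y := h2.symm
      _ = x * ⁅y, x⁆ * y := by rw [(hc x).eq]
      _ = x * (y * ⁅y, x⁆) := by rw [mul_assoc, (hc y).eq]
      _ = x * y * ⁅y, x⁆ := by rw [mul_assoc]
  induction n with
  | zero => simp
  | succ n ih =>
    calc y ^ (n + 1) * x = y ^ n * (y * x) := by rw [pow_succ, mul_assoc]
      _ = y ^ n * (x * y * ⁅y, x⁆) := by rw [h1]
      _ = (y ^ n * x) * y * ⁅y, x⁆ := by simp [mul_assoc]
      _ = x * y ^ n * ⁅y, x⁆ ^ n * y * ⁅y, x⁆ := by rw [ih]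
      _ = x * y ^ n * (⁅y, x⁆ ^ n * y) * ⁅y, x⁆ := by simp [mul_assoc]
      _ = x * y ^ n * (y * ⁅y, x⁆ ^ n) * ⁅y, x⁆ := by rw [((hc y).pow_left n).eq]
      _ = x * y ^ (n + 1) * ⁅y, x⁆ ^ (n + 1) := by rw [pow_succ, pow_succ]; simp [mul_assoc]

private lemma mul_pow_choose {G : Type*} [Group G] (x y : G)
    (hc : ∀ g : G, Commute ⁅y, x⁆ g) (n : ℕ) :
    (x * y) ^ n = x ^ n * y ^ n * ⁅y, x⁆ ^ n.choose 2 := by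
  induction n with
  | zero => simp
  | succ n ih =>
    have hch : (n + 1).choose 2 = n + n.choose 2 := by
      rw [Nat.choose_succ_succ, Nat.choose_one_right]
    calc (x * y) ^ (n + 1) = (x * y) ^ n * (x * y) := pow_succ _ _
      _ = x ^ n * y ^ n * ⁅y, x⁆ ^ n.choose 2 * (x * y) := by rw [ih]
      _ = x ^ n * y ^ n * (⁅y, x⁆ ^ n.choose 2 * x) * y := by simp [mul_assoc]
      _ = x ^ n * y ^ n * (x * ⁅y, x⁆ ^ n.choose 2) * y := by rw [((hc x).pow_left _).eq]
      _ = x ^ n * (y ^ n * x) * (⁅y, x⁆ ^ n.choose 2 * y) := by simp [mul_assoc]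
      _ = x ^ n * (y ^ n * x) * (y * ⁅y, x⁆ ^ n.choose 2) := by rw [((hc y).pow_left _).eq]
      _ = x ^ n * (x * y ^ n * ⁅y, x⁆ ^ n) * (y * ⁅y, x⁆ ^ n.choose 2) := by
          rw [semicomm_pow_aux x y hc n]
      _ = x ^ (n + 1) * (y ^ n * (⁅y, x⁆ ^ n * y)) * ⁅y, x⁆ ^ n.choose 2 := by
          rw [pow_succ]; simp [mul_assoc]
      _ = x ^ (n + 1) * (y ^ n * (y * ⁅y, x⁆ ^ n)) * ⁅y, x⁆ ^ n.choose 2 := by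
          rw [((hc y).pow_left _).eq]
      _ = x ^ (n + 1) * y ^ (n + 1) * ⁅y, x⁆ ^ ((n + 1).choose 2) := by
          rw [hch]; simp [pow_succ, pow_add, mul_assoc]

theorem stmt13 {p : ℕ} [Fact p.Prime] (hodd : Odd p)
    {G : Type*} [Group G] [Finite G] (hp : IsPGroup p G)
    (hexp : Monoid.exponent G = p ^ 2)
    (hucs : ∀ H : Subgroup G, H.Characteristic → H = ⊥ ∨ H = frattini G ∨ H = ⊤)
    (f : G ⧸ frattini G → frattini G)
    (hf : ∀ x : G, (f ((x : G ⧸ frattini G)) : G) = x ^ p)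
    (hbij : Function.Bijective f)
    (m : G ⧸ frattini G → G ⧸ frattini G → G ⧸ frattini G)
    (hm : ∀ x y : G, (f (m x y) : G) = ⁅x, y⁆) :
    ∀ H : Subgroup G, frattini G ≤ H →
      (⁅H, (⊤ : Subgroup G)⁆ ≤ Subgroup.closure {x : G | ∃ h ∈ H, x = h ^ p} ↔
        ∀ a ∈ H.map (QuotientGroup.mk' (frattini G)),
          ∀ b : G ⧸ frattini G,
            m a b ∈ H.map (QuotientGroup.mk' (frattini G))) := by
  intro H hΦH
  have hprime : p.Prime := Fact.out
  have hGnt : Nontrivial G := by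
    by_contra h
    rw [not_nontrivial_iff_subsingleton] at h
    have h1 : Monoid.exponent G = 1 := Monoid.exp_eq_one_of_subsingleton
    rw [hexp] at h1
    nlinarith [hprime.two_le]
  -- commutators are central and lie in the Frattini subgroup
  have hder : commutator G ≤ frattini G := by
    rcases hucs (commutator G) inferInstance with h | h | h
    · rw [h]; exact bot_le
    · rw [h]
    · exfalso
      have hnil : Group.IsNilpotent G := hp.isNilpotent
      have htop : ∀ n, Subgroup.lowerCentralSeries (⊤ : Subgroup G) n = ⊤ := by
        intro n
        induction n with
        | zero => rfl
        | succ n ih =>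
          rw [lowerCentralSeries_succ, ih]
          exact h
      obtain ⟨n, hn⟩ := nilpotent_iff_lowerCentralSeries.mp hnil
      rw [htop n] at hn
      exact top_ne_bot hn
  have hcen : commutator G ≤ Subgroup.center G := by
    rcases hucs (Subgroup.center G) inferInstance with h | h | h
    · exfalso
      have hnt := hp.center_nontrivial
      rw [h] at hnt
      exact not_nontrivial_iff_subsingleton.mpr inferInstance hnt
    · rw [h]; exact hder
    · rw [h]; exact le_top
  have hcomm : ∀ x y : G, ⁅x, y⁆ ∈ Subgroup.center G ∧ ⁅x, y⁆ ∈ frattini G := by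
    intro x y
    have h1 : ⁅x, y⁆ ∈ commutator G :=
      Subgroup.commutator_mem_commutator (Subgroup.mem_top x) (Subgroup.mem_top y)
    exact ⟨hcen h1, hder h1⟩
  -- Frattini subgroup has exponent p
  have hphi_p : ∀ g : G, g ∈ frattini G → g ^ p = 1 := by
    intro g hg
    obtain ⟨q, hq⟩ := hbij.2 ⟨g, hg⟩
    obtain ⟨z, rfl⟩ := QuotientGroup.mk_surjective q
    have h1 : g = z ^ p := by
      have h2 := hf z
      rw [hq] at h2
      exact h2.symm ▸ rfl
    rw [h1, ← pow_mul]
    have h3 : p * p = Monoid.exponent G := by rw [hexp]; ring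
    rw [h3]
    exact Monoid.pow_exponent_eq_one z
  -- the p-th power map is multiplicative
  have hmul_pow : ∀ x y : G, (x * y) ^ p = x ^ p * y ^ p := by
    intro x y
    have hc : ∀ g : G, Commute ⁅y, x⁆ g := by
      intro g
      exact (show Commute g ⁅y, x⁆ from Subgroup.mem_center_iff.mp (hcomm y x).1 g).symm
    have hcp : ⁅y, x⁆ ^ p = 1 := hphi_p _ (hcomm y x).2
    rw [mul_pow_choose x y hc p]
    obtain ⟨k, hk⟩ := hodd
    have h2 : p.choose 2 = p * k := by
      have hpk : p - 1 = 2 * k := by omega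
      rw [Nat.choose_two_right, hpk, Nat.mul_div_assoc p ⟨k, rfl⟩,
        Nat.mul_div_cancel_left k (by norm_num)]
    rw [h2, pow_mul, hcp, one_pow, mul_one]
  -- the set of p-th powers of H is a subgroup
  obtain ⟨K, hK⟩ : ∃ K : Subgroup G, (K : Set G) = {x : G | ∃ h ∈ H, x = h ^ p} := by
    refine ⟨{ carrier := {x : G | ∃ h ∈ H, x = h ^ p}
              mul_mem' := ?_
              one_mem' := ⟨1, H.one_mem, (one_pow p).symm⟩
              inv_mem' := ?_ }, rfl⟩
    · rintro a b ⟨h, hh, rfl⟩ ⟨k, hk, rfl⟩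
      exact ⟨h * k, H.mul_mem hh hk, (hmul_pow h k).symm⟩
    · rintro a ⟨h, hh, rfl⟩
      exact ⟨h⁻¹, H.inv_mem hh, (inv_pow h p).symm⟩
  constructor
  · intro hPE a ha b
    rw [Subgroup.mem_map] at ha
    obtain ⟨x, hx, rfl⟩ := ha
    obtain ⟨y, rfl⟩ := QuotientGroup.mk_surjective b
    have h1 : ⁅x, y⁆ ∈ Subgroup.closure {x : G | ∃ h ∈ H, x = h ^ p} :=
      hPE (Subgroup.commutator_mem_commutator hx (Subgroup.mem_top y))
    have h2 : ⁅x, y⁆ ∈ K := by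
      refine (Subgroup.closure_le K).mpr ?_ h1
      rw [hK]
    rw [← SetLike.mem_coe, hK] at h2
    obtain ⟨h, hh, hhp⟩ := h2
    have h3 : (f (m x y) : G) = (f ((h : G ⧸ frattini G)) : G) := by
      rw [hm, hf, hhp]
    have h4 : m x y = ((h : G ⧸ frattini G)) := hbij.1 (Subtype.ext h3)
    exact Subgroup.mem_map.mpr ⟨h, hh, h4.symm⟩
  · intro hid
    rw [Subgroup.commutator_le]
    intro x hx y _
    have hax : (QuotientGroup.mk' (frattini G)) x ∈ H.map (QuotientGroup.mk' (frattini G)) :=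
      Subgroup.mem_map_of_mem _ hx
    have h1 := hid _ hax ((y : G ⧸ frattini G))
    rw [Subgroup.mem_map] at h1
    obtain ⟨h, hh, hh2⟩ := h1
    have h3 : ⁅x, y⁆ = h ^ p := by
      rw [← hm x y,
        show m (x : G ⧸ frattini G) ((y : G ⧸ frattini G)) = ((h : G ⧸ frattini G)) from hh2.symm,
        hf]
    rw [h3]
    exact Subgroup.subset_closure ⟨h, hh, rfl⟩
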